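/- If X is an infinite subset of ℕ and F : [ℕ]^e → c is a coloring such that every finite restriction of F belongs to a tree of 'good' colorings (colorings with no large homogeneous set of cardinality ≥ k), then taking an infinite homogeneous set Y for F (by the infinite Ramsey theorem) and a finite large subset X₀ ⊆ Y with |X₀| ≥ k yields a contradiction. Formal statement: for all k, e, c, there is no coloring F : [ℕ]^e → c such that no finite large subset of ℕ of cardinality ≥ k is homogeneous for F. -/

import Mathlib

/-- `Y` is homogeneous for the coloring `F` on `e`-element subsets. -/
def Homog {c : ℕ} (F : Finset ℕ → Fin c) (e : ℕ) (Y : Finset ℕ) : Prop :=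
  ∀ s ⊆ Y, ∀ t ⊆ Y, s.card = e → t.card = e → F s = F t



open Set


/-- Infinite Ramsey theorem, constant-color form. -/
lemma infinite_ramsey {c : ℕ} : ∀ (e : ℕ) (F : Finset ℕ → Fin c) (S : Set ℕ), S.Infinite →
    ∃ T ⊆ S, T.Infinite ∧ ∃ i : Fin c, ∀ s : Finset ℕ, ↑s ⊆ T → s.card = e → F s = i := by
  intro e
  induction e with
  | zero =>
    intro F S hS
    refine ⟨S, le_refl _, hS, F ∅, fun s _ hs => ?_⟩
    rw [Finset.card_eq_zero] at hs; rw [hs]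
  | succ e IH =>
    intro F S hS
    -- step lemma
    have step : ∀ U : Set ℕ, U.Infinite → ∃ a ∈ U, ∃ U' ⊆ U, U'.Infinite ∧
        (∀ x ∈ U', a < x) ∧ ∃ i : Fin c, ∀ s : Finset ℕ, ↑s ⊆ U' → s.card = e →
          F (insert a s) = i := by
      intro U hU
      obtain ⟨a, ha⟩ := hU.nonempty
      have hU0 : (U \ Set.Iic a).Infinite := hU.diff (Set.finite_Iic a)
      obtain ⟨T, hTsub, hTinf, i, hi⟩ := IH (fun s => F (insert a s)) _ hU0
      exact ⟨a, ha, T, fun x hx => (hTsub hx).1, hTinf,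
        fun x hx => not_le.mp (fun h => (hTsub hx).2 h), i, hi⟩
    -- state type
    let St := {q : ℕ × Set ℕ // q.1 ∈ S ∧ q.2 ⊆ S ∧ q.2.Infinite ∧ (∀ x ∈ q.2, q.1 < x) ∧
      ∃ i : Fin c, ∀ s : Finset ℕ, ↑s ⊆ q.2 → s.card = e → F (insert q.1 s) = i}
    have next : ∀ q : St, ∃ q' : St, q'.1.1 ∈ q.1.2 ∧ q'.1.2 ⊆ q.1.2 := by
      rintro ⟨⟨a, U⟩, haS, hUS, hU, hlt, _⟩
      obtain ⟨a', ha', U', hsub, hinf, hlt', i, hi⟩ := step U hU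
      exact ⟨⟨⟨a', U'⟩, hUS ha', fun x hx => hUS (hsub hx), hinf, hlt', i, hi⟩, ha', hsub⟩
    obtain ⟨a0, ha0, U0, hU0S, hU0inf, hlt0, i0, hi0⟩ := step S hS
    let q0 : St := ⟨⟨a0, U0⟩, ha0, hU0S, hU0inf, hlt0, i0, hi0⟩
    -- the sequence
    let g : ℕ → St := fun n => Nat.rec q0 (fun _ q => (next q).choose) n
    have gsucc : ∀ n, (g (n+1)).1.1 ∈ (g n).1.2 ∧ (g (n+1)).1.2 ⊆ (g n).1.2 :=
      fun n => (next (g n)).choose_spec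
    set a : ℕ → ℕ := fun n => (g n).1.1 with ha_def
    have hmono : StrictMono a := strictMono_nat_of_lt_succ fun n =>
      (g n).2.2.2.2.1 _ (gsucc n).1
    have hUchain : ∀ n m, n ≤ m → (g m).1.2 ⊆ (g n).1.2 := by
      intro n m h
      induction m with
      | zero => rw [Nat.le_zero.mp h]
      | succ m ih =>
        rcases Nat.lt_or_ge n (m+1) with h' | h'
        · exact ((gsucc m).2).trans (ih (Nat.lt_succ_iff.mp h'))
        · rw [Nat.le_antisymm h h']
    have haU : ∀ n m, n < m → a m ∈ (g n).1.2 := by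
      intro n m h
      have : m - 1 + 1 = m := by omega
      have h2 := (gsucc (m-1)).1
      rw [this] at h2
      exact hUchain n (m-1) (Nat.le_pred_of_lt h) h2
    -- colors
    let φ : ℕ → Fin c := fun n => (g n).2.2.2.2.2.choose
    have hφ : ∀ n, ∀ s : Finset ℕ, ↑s ⊆ (g n).1.2 → s.card = e → F (insert (a n) s) = φ n :=
      fun n => (g n).2.2.2.2.2.choose_spec
    obtain ⟨i, hNinf⟩ := Finite.exists_infinite_fiber φ
    rw [Set.infinite_coe_iff] at hNinf
    refine ⟨a '' (φ ⁻¹' {i}), ?_, hNinf.image (hmono.injective.injOn), i, ?_⟩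
    · rintro x ⟨n, _, rfl⟩
      cases n with
      | zero => exact ha0
      | succ n => exact (g n).2.2.1 (gsucc n).1
    · intro s hs hcard
      have hne : s.Nonempty := Finset.card_pos.mp (by omega)
      obtain ⟨n, hn, hmin⟩ := hs (s.min'_mem hne)
      have herase : ↑(s.erase (s.min' hne)) ⊆ (g n).1.2 := by
        intro x hx
        have hxs := Finset.mem_of_mem_erase hx
        obtain ⟨m, _, rfl⟩ := hs hxs
        have : a n < a m := by
          have h1 := s.min'_le _ hxs
          have h2 := Finset.ne_of_mem_erase hx
          rw [← hmin] at h1 h2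
          omega
        exact haU n m (hmono.lt_iff_lt.mp this)
      have hc : (s.erase (s.min' hne)).card = e := by
        rw [Finset.card_erase_of_mem (s.min'_mem hne)]; omega
      have := hφ n _ herase hc
      rw [hmin, Finset.insert_erase (s.min'_mem hne)] at this
      rw [this, hn]

/-- Truth of the (infinitary form of the) Paris–Harrington statement: for all
`k, e, c` there is no coloring `F : [ℕ]^e → c` such that no finite large subset
of `ℕ` of cardinality at least `k` is homogeneous for `F`. -/
theorem stmt10 (k e c : ℕ) :
    ¬ ∃ F : Finset ℕ → Fin c,
        ∀ Y : Finset ℕ, k ≤ Y.card → Y.min ≤ (Y.card : WithBot ℕ) → ¬ Homog F e Y := by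
  rintro ⟨F, hF⟩
  obtain ⟨T, _, hTinf, i, hi⟩ := infinite_ramsey e F Set.univ Set.infinite_univ
  obtain ⟨m, hm⟩ := hTinf.nonempty
  obtain ⟨Z, hZT, hZcard⟩ := hTinf.exists_subset_card_eq (max k (m+1))
  refine hF (insert m Z) ?_ ?_ ?_
  · calc k ≤ Z.card := by omega
    _ ≤ (insert m Z).card := Finset.card_le_card (Finset.subset_insert _ _)
  · have h1 : m ≤ (insert m Z).card :=
      le_trans (by omega : m ≤ Z.card) (Finset.card_le_card (Finset.subset_insert _ _))
    exact le_trans (Finset.min_le (Finset.mem_insert_self _ _)) (WithBot.coe_le_coe.mpr h1)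
  · intro s hs t ht hse hte
    have hsub : ↑(insert m Z) ⊆ T := by
      intro x hx
      rcases Finset.mem_insert.mp (by exact_mod_cast hx) with rfl | h
      · exact hm
      · exact hZT h
    rw [hi s (le_trans (by exact_mod_cast hs) hsub) hse,
        hi t (le_trans (by exact_mod_cast ht) hsub) hte]
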